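/- Let G be a connected undirected unweighted graph with m edges and spectral gap γ_G > 0. Then for any two vertices u, v, the commute time satisfies κ_G(u,v) = T_G(u,v) + T_G(v,u) ≤ (2m/γ_G)(1/d(u) + 1/d(v)), and in particular the hitting time T_G(u,v) ≤ (2m/γ_G)(1/d(u) + 1/d(v)). -/

import Mathlib

open Finset

/-- Sum over all vertices of sums over neighborhoods equals degree-weighted sum. -/
lemma aux_sum_neighbors {V : Type*} [Fintype V] [DecidableEq V]
    (G : SimpleGraph V) [DecidableRel G.Adj] (f : V → ℝ) :
    ∑ x, ∑ w ∈ G.neighborFinset x, f w = ∑ w, (G.degree w : ℝ) * f w := by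
  have h1 : ∀ x : V, ∑ w ∈ G.neighborFinset x, f w = ∑ w, if G.Adj x w then f w else 0 := by
    intro x
    rw [SimpleGraph.neighborFinset_eq_filter, Finset.sum_filter]
  simp only [h1]
  rw [Finset.sum_comm]
  congr 1
  funext w
  have h2 : ∀ x : V, (if G.Adj x w then f w else 0) = (if G.Adj w x then f w else 0) := by
    intro x
    have : G.Adj x w ↔ G.Adj w x := G.adj_comm x w
    simp only [this]
  simp only [h2]
  rw [← Finset.sum_filter, ← SimpleGraph.neighborFinset_eq_filter, Finset.sum_const]
  rw [SimpleGraph.card_neighborFinset_eq_degree, nsmul_eq_mul]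

theorem stmt_13 (V : Type*) [Fintype V] [DecidableEq V]
    (G : SimpleGraph V) [DecidableRel G.Adj] (hconn : G.Connected)
    (hdeg : ∀ v, 0 < G.degree v)
    (γ : ℝ) (hγ : 0 < γ)
    (Lnorm : Matrix V V ℝ)
    (hL : ∀ u v, Lnorm u v = if u = v then 1 else
      if G.Adj u v then -1 / Real.sqrt ((G.degree u : ℝ) * (G.degree v : ℝ)) else 0)
    (hspec_low : ∀ x : V → ℝ, (∑ u, Real.sqrt (G.degree u : ℝ) * x u = 0) →
      γ * ∑ u, (x u) ^ 2 ≤ ∑ u, ∑ v, x u * Lnorm u v * x v)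
    (hspec_high : ∀ x : V → ℝ,
      ∑ u, ∑ v, x u * Lnorm u v * x v ≤ (2 - γ) * ∑ u, (x u) ^ 2)
    (T : V → V → ℝ)
    (hT0 : ∀ v, T v v = 0)
    (hTrec : ∀ u v, u ≠ v →
      T u v = 1 + (∑ w ∈ G.neighborFinset u, T w v) / (G.degree u : ℝ)) :
    ∀ u v, T u v + T v u ≤
        (2 * (G.edgeFinset.card : ℝ) / γ) * (1 / (G.degree u : ℝ) + 1 / (G.degree v : ℝ)) ∧
      T u v ≤
        (2 * (G.edgeFinset.card : ℝ) / γ) * (1 / (G.degree u : ℝ) + 1 / (G.degree v : ℝ)) := by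
  classical
  have hd : ∀ x : V, (0:ℝ) < (G.degree x : ℝ) := fun x => by exact_mod_cast hdeg x
  set d : V → ℝ := fun x => (G.degree x : ℝ) with hd_def
  set s : V → ℝ := fun x => Real.sqrt (d x) with hs_def
  have hs : ∀ x, 0 < s x := fun x => Real.sqrt_pos.mpr (hd x)
  have hs2 : ∀ x, s x ^ 2 = d x := fun x => Real.sq_sqrt (hd x).le
  set m : ℝ := (G.edgeFinset.card : ℝ) with hm_def
  have hsum_d : ∑ x, d x = 2 * m := by
    have := SimpleGraph.sum_degrees_eq_twice_card_edges G
    simp only [hd_def, hm_def]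
    exact_mod_cast congrArg (Nat.cast : ℕ → ℝ) this
  -- nonnegativity of T
  have hTnn : ∀ a b : V, 0 ≤ T a b := by
    intro a b
    obtain ⟨a₀, _, hmin⟩ := Finset.exists_min_image Finset.univ (fun x => T x b)
      ⟨b, Finset.mem_univ b⟩
    by_cases h0 : a₀ = b
    · have := hmin a (Finset.mem_univ a)
      simp only [h0, hT0] at this
      exact this
    · exfalso
      have hrec := hTrec a₀ b h0
      have hsum : (G.degree a₀ : ℝ) * T a₀ b ≤ ∑ w ∈ G.neighborFinset a₀, T w b := by
        have hc := Finset.card_nsmul_le_sum (G.neighborFinset a₀) (fun w => T w b) (T a₀ b)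
          (fun w _ => hmin w (Finset.mem_univ w))
        rw [SimpleGraph.card_neighborFinset_eq_degree, nsmul_eq_mul] at hc
        exact hc
      have hdpos : (0:ℝ) < (G.degree a₀ : ℝ) := hd a₀
      have hge : T a₀ b ≤ (∑ w ∈ G.neighborFinset a₀, T w b) / (G.degree a₀ : ℝ) := by
        rw [le_div_iff₀ hdpos]; linarith
      linarith
  -- the combinatorial Laplacian as an operator on functions
  set Lap : (V → ℝ) → V → ℝ := fun f x => d x * f x - ∑ w ∈ G.neighborFinset x, f w
    with hLap_def
  have hLap_sum : ∀ f : V → ℝ, ∑ x, Lap f x = 0 := by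
    intro f
    simp only [hLap_def]
    rw [Finset.sum_sub_distrib, aux_sum_neighbors G f]
    simp [hd_def]
  have hLap_ne : ∀ b x : V, x ≠ b → Lap (fun w => T w b) x = d x := by
    intro b x hxb
    have hrec := hTrec x b hxb
    have hdx : d x ≠ 0 := (hd x).ne'
    simp only [hLap_def]
    rw [hrec]
    change d x * (1 + _ / d x) - _ = d x
    rw [mul_add, mul_one, mul_div_assoc', mul_div_cancel_left₀ _ hdx]; ring
  have hLap_eq : ∀ b : V, Lap (fun w => T w b) b = d b - 2 * m := by
    intro b
    have h1 := hLap_sum (fun w => T w b)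
    have h2 : ∑ x, Lap (fun w => T w b) x
        = Lap (fun w => T w b) b + ∑ x ∈ Finset.univ.erase b, Lap (fun w => T w b) x := by
      rw [← Finset.add_sum_erase _ _ (Finset.mem_univ b)]
    have h3 : ∑ x ∈ Finset.univ.erase b, Lap (fun w => T w b) x
        = ∑ x ∈ Finset.univ.erase b, d x := by
      apply Finset.sum_congr rfl
      intro x hx
      exact hLap_ne b x (Finset.ne_of_mem_erase hx)
    have h4 : ∑ x ∈ Finset.univ.erase b, d x = 2 * m - d b := by
      have := Finset.add_sum_erase Finset.univ d (Finset.mem_univ b)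
      rw [hsum_d] at this
      linarith
    rw [h2, h3, h4] at h1
    linarith
  intro u v
  by_cases huv : u = v
  · subst huv
    simp only [hT0, add_zero]
    have hmnn : (0:ℝ) ≤ m := by rw [hm_def]; exact Nat.cast_nonneg _
    have hbnd : 0 ≤ 2 * m / γ * (1 / d u + 1 / d u) :=
      mul_nonneg (div_nonneg (by linarith) hγ.le)
        (add_nonneg (div_nonneg zero_le_one (hd u).le) (div_nonneg zero_le_one (hd u).le))
    exact ⟨by simpa using hbnd, by simpa using hbnd⟩
  -- main case u ≠ v
  set h : V → ℝ := fun x => T x v - T x u with hh_def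
  have hLaph : ∀ x, Lap h x
      = 2 * m * ((if x = u then (1:ℝ) else 0) - (if x = v then 1 else 0)) := by
    intro x
    have hsplit : Lap h x = Lap (fun w => T w v) x - Lap (fun w => T w u) x := by
      simp only [hLap_def, hh_def, Finset.sum_sub_distrib]
      ring
    by_cases hxu : x = u
    · subst hxu
      rw [hsplit, hLap_ne v x huv, hLap_eq x]
      simp [huv]
    · by_cases hxv : x = v
      · subst hxv
        rw [hsplit, hLap_eq x, hLap_ne u x (Ne.symm huv)]
        simp [Ne.symm huv, hxu]
      · rw [hsplit, hLap_ne v x hxv, hLap_ne u x hxu]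
        simp [hxu, hxv]
  have hm0 : (0:ℝ) < m := by
    have h1 : d u ≤ ∑ x, d x := Finset.single_le_sum (fun i _ => (hd i).le) (Finset.mem_univ u)
    have := hd u
    linarith [hsum_d ▸ h1]
  set c : ℝ := (∑ x, d x * h x) / (2 * m) with hc_def
  set y : V → ℝ := fun x => s x * (h x - c) with hy_def
  have horth : ∑ x, s x * y x = 0 := by
    have hterm : ∀ x, s x * y x = d x * h x - d x * c := by
      intro x
      simp only [hy_def]
      have : s x * (s x * (h x - c)) = s x ^ 2 * (h x - c) := by ring
      rw [this, hs2]
      ring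
    simp only [hterm]
    rw [Finset.sum_sub_distrib, ← Finset.sum_mul]
    rw [hsum_d, hc_def]
    field_simp
    ring
  have happly : ∀ x, (∑ w, Lnorm x w * y w) = Lap h x / s x := by
    intro x
    have hterm : ∀ w, Lnorm x w * y w
        = (if x = w then y w else 0) + (if G.Adj x w then -(1 / s x) * (h w - c) else 0) := by
      intro w
      rw [hL]
      by_cases hxw : x = w
      · subst hxw
        simp [SimpleGraph.irrefl]
      · simp only [hxw, if_false]
        by_cases hadj : G.Adj x w
        · simp only [hadj, if_true]
          have hsqrt : Real.sqrt ((G.degree x : ℝ) * (G.degree w : ℝ)) = s x * s w := by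
            rw [Real.sqrt_mul (hd x).le]
          rw [hsqrt]
          simp only [hy_def]
          have hx0 := (hs x).ne'
          have hw0 := (hs w).ne'
          field_simp
          ring
        · simp [hadj]
    simp only [hterm]
    rw [Finset.sum_add_distrib]
    have h1 : ∑ w, (if x = w then y w else 0) = y x := by
      simp
    have h2 : ∑ w, (if G.Adj x w then -(1 / s x) * (h w - c) else 0)
        = -(1 / s x) * ∑ w ∈ G.neighborFinset x, (h w - c) := by
      rw [Finset.mul_sum, SimpleGraph.neighborFinset_eq_filter, Finset.sum_filter]
    rw [h1, h2]
    have hN : ∑ w ∈ G.neighborFinset x, (h w - c)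
        = (∑ w ∈ G.neighborFinset x, h w) - d x * c := by
      rw [Finset.sum_sub_distrib, Finset.sum_const, SimpleGraph.card_neighborFinset_eq_degree,
        nsmul_eq_mul]
    rw [hN]
    simp only [hLap_def, hy_def]
    have hx0 := (hs x).ne'
    rw [← hs2 x]
    field_simp
    ring
  set Q : ℝ := ∑ x, ∑ w, y x * Lnorm x w * y w with hQ_def
  have hQ2 : Q = ∑ x, y x * (Lap h x / s x) := by
    simp only [hQ_def]
    apply Finset.sum_congr rfl
    intro x _
    rw [← happly, Finset.mul_sum]
    apply Finset.sum_congr rfl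
    intro w _
    ring
  have hQ1 : Q = ∑ x, (h x - c) * Lap h x := by
    rw [hQ2]
    apply Finset.sum_congr rfl
    intro x _
    simp only [hy_def]
    have hx0 := (hs x).ne'
    field_simp
  have hκQ : Q = 2 * m * (T u v + T v u) := by
    rw [hQ1]
    have hterm : ∀ x, (h x - c) * Lap h x
        = (if x = u then 2 * m * (h x - c) else 0) - (if x = v then 2 * m * (h x - c) else 0) := by
      intro x
      rw [hLaph x]
      split_ifs <;> ring
    simp only [hterm]
    rw [Finset.sum_sub_distrib, Finset.sum_ite_eq' Finset.univ u, Finset.sum_ite_eq' Finset.univ v]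
    simp only [Finset.mem_univ, if_true]
    have hu : h u = T u v := by simp [hh_def, hT0]
    have hv : h v = -(T v u) := by simp [hh_def, hT0]
    rw [hu, hv]
    ring
  have hW : ∑ x, (Lap h x / s x) ^ 2 = (2 * m) ^ 2 * (1 / d u + 1 / d v) := by
    have hterm : ∀ x, (Lap h x / s x) ^ 2
        = (if x = u then (2 * m) ^ 2 / d x else 0) + (if x = v then (2 * m) ^ 2 / d x else 0) := by
      intro x
      rw [hLaph x]
      by_cases hxu : x = u
      · subst hxu
        rw [if_pos rfl, if_pos rfl, if_neg huv, if_neg huv]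
        rw [← hs2 x]
        have := (hs x).ne'
        field_simp
        ring
      · by_cases hxv : x = v
        · subst hxv
          rw [if_neg hxu, if_pos rfl, if_neg hxu, if_pos rfl]
          rw [← hs2 x]
          have := (hs x).ne'
          field_simp
          ring
        · simp [hxu, hxv]
    simp only [hterm]
    rw [Finset.sum_add_distrib, Finset.sum_ite_eq' Finset.univ u, Finset.sum_ite_eq' Finset.univ v]
    simp only [Finset.mem_univ, if_true]
    ring
  have hlow : γ * ∑ x, y x ^ 2 ≤ Q := hspec_low y horth
  have hCS : Q ^ 2 ≤ (∑ x, y x ^ 2) * ((2 * m) ^ 2 * (1 / d u + 1 / d v)) := by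
    rw [hQ2, ← hW]
    exact Finset.sum_mul_sq_le_sq_mul_sq Finset.univ y (fun x => Lap h x / s x)
  have hWnn0 : 0 ≤ (2 * m) ^ 2 * (1 / d u + 1 / d v) :=
    mul_nonneg (sq_nonneg _)
      (add_nonneg (div_nonneg zero_le_one (hd u).le) (div_nonneg zero_le_one (hd v).le))
  set W : ℝ := (2 * m) ^ 2 * (1 / d u + 1 / d v) with hW_def
  have hWnn : 0 ≤ W := hWnn0
  have hQle : Q ≤ W / γ := by
    rcases le_or_gt Q 0 with h0 | h0
    · have : 0 ≤ W / γ := div_nonneg hWnn hγ.le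
      linarith
    · have hSle : ∑ x, y x ^ 2 ≤ Q / γ := by
        rw [le_div_iff₀ hγ]; linarith
      have h1 : Q ^ 2 ≤ (Q / γ) * W := le_trans hCS (mul_le_mul_of_nonneg_right hSle hWnn)
      have h2 : γ * Q * Q ≤ W * Q := by
        have : γ * Q ^ 2 ≤ W * Q := by
          calc γ * Q ^ 2 ≤ γ * ((Q / γ) * W) := by
                exact mul_le_mul_of_nonneg_left h1 hγ.le
            _ = W * Q := by field_simp
        nlinarith
      have h3 : γ * Q ≤ W := le_of_mul_le_mul_right h2 h0
      rw [le_div_iff₀ hγ]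
      linarith [h3]
  have hfinal : T u v + T v u ≤ 2 * m / γ * (1 / d u + 1 / d v) := by
    have hκ : T u v + T v u = Q / (2 * m) := by
      rw [eq_div_iff (by linarith : (0:ℝ) < 2 * m).ne', hκQ]; ring
    rw [hκ, div_le_iff₀ (by linarith : (0:ℝ) < 2 * m)]
    have heq : 2 * m / γ * (1 / d u + 1 / d v) * (2 * m) = W / γ := by
      simp only [hW_def]; ring
    rw [heq]
    exact hQle
  constructor
  · show T u v + T v u ≤ 2 * m / γ * (1 / d u + 1 / d v)
    exact hfinal
  · show T u v ≤ 2 * m / γ * (1 / d u + 1 / d v)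
    linarith [hTnn v u]
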